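/- Let n ≥ 1, 0 < α < n and 0 < q < ∞. There exist constants τ > 1 and C, c > 0, depending only on n, q and α, such that the following holds: for every nonnegative locally finite Borel measure μ on ℝ^n, every λ > 0, every ε with 0 < ε < 1, and every axis-parallel cube Q of side length ℓ(Q) = 2^{j₀} (j₀ ∈ ℤ), if there exists a point y ∈ ℝ^n with dist(y, Q) ≤ 6√n · ℓ(Q) and F(μ)(y) ≤ λ, then |{x ∈ Q : F(μ)(x) > τλ and M_α(μ)(x) ≤ ελ}| ≤ C e^{−c/ε^q} |Q|, where |·| denotes Lebesgue measure. -/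

import Mathlib

open MeasureTheory Metric Set ENNReal

noncomputable section

/-- The nonlinear potential `T^q_α(μ)(x) = (∫_0^∞ (μ(B(x,r))/r^{n−α})^q dr/r)^{1/q}`. -/
def Tpot (n : ℕ) (α q : ℝ) (μ : Measure (EuclideanSpace ℝ (Fin n)))
    (x : EuclideanSpace ℝ (Fin n)) : ℝ≥0∞ :=
  (∫⁻ r in Set.Ioi (0 : ℝ),
      (μ (Metric.ball x r) / ENNReal.ofReal (r ^ ((n : ℝ) - α))) ^ q
        * ENNReal.ofReal (1 / r)) ^ (1 / q)

/-- The fractional maximal function `M_α(μ)(x) = sup_{r>0} μ(B(x,r))/r^{n−α}`. -/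
def Mfrac (n : ℕ) (α : ℝ) (μ : Measure (EuclideanSpace ℝ (Fin n)))
    (x : EuclideanSpace ℝ (Fin n)) : ℝ≥0∞ :=
  ⨆ (r : ℝ) (_ : 0 < r), μ (Metric.ball x r) / ENNReal.ofReal (r ^ ((n : ℝ) - α))

/-- The closed axis-parallel cube with center `c` and side length `s`. -/
def axisCube (n : ℕ) (c : EuclideanSpace ℝ (Fin n)) (s : ℝ) :
    Set (EuclideanSpace ℝ (Fin n)) :=
  {x | ∀ i, |x i - c i| ≤ s / 2}

/-- The weighted measure `|S|_σ = ∫_S σ dx`. -/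
def wMeasure (n : ℕ) (σ : EuclideanSpace ℝ (Fin n) → ℝ)
    (S : Set (EuclideanSpace ℝ (Fin n))) : ℝ≥0∞ :=
  ∫⁻ x in S, ENNReal.ofReal (σ x)

/-- `σ` is a weak `A∞` weight with constants `Cσ, θ`: it is nonnegative, locally
integrable, and `|E|_σ ≤ Cσ (|E|/|Q|)^θ |2Q|_σ` for all cubes `Q` and measurable `E ⊆ Q`. -/
def IsWeakAInfty (n : ℕ) (σ : EuclideanSpace ℝ (Fin n) → ℝ) (Cσ θ : ℝ) : Prop :=
  0 < Cσ ∧ 0 < θ ∧ (∀ x, 0 ≤ σ x) ∧ LocallyIntegrable σ ∧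
    ∀ (c : EuclideanSpace ℝ (Fin n)) (s : ℝ), 0 < s →
      ∀ E ⊆ axisCube n c s, MeasurableSet E →
        wMeasure n σ E ≤
          ENNReal.ofReal (Cσ * ((volume E).toReal / (volume (axisCube n c s)).toReal) ^ θ)
            * wMeasure n σ (axisCube n c (2 * s))

/-- The dyadic cube `2^k(m + [0,1)^n)`. -/
def dyadicCube (n : ℕ) (k : ℤ) (m : Fin n → ℤ) : Set (EuclideanSpace ℝ (Fin n)) :=
  {x | ∀ i, (2 : ℝ) ^ k * m i ≤ x i ∧ x i < (2 : ℝ) ^ k * (m i + 1)}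

/-- The unique dyadic cube of side length `2^k` containing `x`. -/
def dyadicCubeAt (n : ℕ) (k : ℤ) (x : EuclideanSpace ℝ (Fin n)) :
    Set (EuclideanSpace ℝ (Fin n)) :=
  dyadicCube n k (fun i => ⌊x i / (2 : ℝ) ^ k⌋)

/-- The dyadic nonlinear potential `𝒯(μ)(x) = (∑_{Q ∋ x} (μ(Q)/ℓ(Q)^{n−α})^q)^{1/q}`. -/
def Tdyadic (n : ℕ) (α q : ℝ) (μ : Measure (EuclideanSpace ℝ (Fin n)))
    (x : EuclideanSpace ℝ (Fin n)) : ℝ≥0∞ :=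
  (∑' k : ℤ,
      (μ (dyadicCubeAt n k x) / ENNReal.ofReal (((2 : ℝ) ^ k) ^ ((n : ℝ) - α))) ^ q) ^ (1 / q)

/-- The dyadic fractional maximal function `ℳ_α(μ)(x) = sup_{Q ∋ x} μ(Q)/ℓ(Q)^{n−α}`. -/
def Mdyadic (n : ℕ) (α : ℝ) (μ : Measure (EuclideanSpace ℝ (Fin n)))
    (x : EuclideanSpace ℝ (Fin n)) : ℝ≥0∞ :=
  ⨆ k : ℤ, μ (dyadicCubeAt n k x) / ENNReal.ofReal (((2 : ℝ) ^ k) ^ ((n : ℝ) - α))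

/-- `F(μ)(x) = (∑_{j∈ℤ} (μ(B(x,2^j))/2^{j(n−α)})^q)^{1/q}`. -/
def Fpot (n : ℕ) (α q : ℝ) (μ : Measure (EuclideanSpace ℝ (Fin n)))
    (x : EuclideanSpace ℝ (Fin n)) : ℝ≥0∞ :=
  (∑' j : ℤ,
      (μ (Metric.ball x ((2 : ℝ) ^ j)) / ENNReal.ofReal (((2 : ℝ) ^ j) ^ ((n : ℝ) - α))) ^ q) ^ (1 / q)

/-- The exponential function extended to `ℝ≥0∞`. -/
def expE (t : ℝ≥0∞) : ℝ≥0∞ :=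
  if t = ⊤ then ⊤ else ENNReal.ofReal (Real.exp t.toReal)

/-- The centered Hardy–Littlewood maximal function of a measure. -/
def Mhl (n : ℕ) (ν : Measure (EuclideanSpace ℝ (Fin n)))
    (x : EuclideanSpace ℝ (Fin n)) : ℝ≥0∞ :=
  ⨆ (r : ℝ) (_ : 0 < r), ν (Metric.ball x r) / volume (Metric.ball x r)

section Helpers

variable {X : Type*} [MeasurableSpace X] [PseudoMetricSpace X] [OpensMeasurableSpace X]


lemma axisCube_eq_preimage (n : ℕ) (c : EuclideanSpace ℝ (Fin n)) (s : ℝ) :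
    axisCube n c s = (MeasurableEquiv.toLp 2 (Fin n → ℝ)).symm ⁻¹'
      (Set.univ.pi fun i => Set.Icc (c i - s / 2) (c i + s / 2)) := by
  ext x
  have he : ∀ i, (MeasurableEquiv.toLp 2 (Fin n → ℝ)).symm x i = x i := fun _ => rfl
  simp only [axisCube, Set.mem_setOf_eq, Set.mem_preimage, Set.mem_pi, Set.mem_univ,
    forall_true_left, Set.mem_Icc, he, abs_le]
  constructor
  · intro h i
    obtain ⟨h1, h2⟩ := h i
    constructor <;> linarith
  · intro h i
    obtain ⟨h1, h2⟩ := h i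
    constructor <;> linarith

lemma volume_axisCube (n : ℕ) (c : EuclideanSpace ℝ (Fin n)) (s : ℝ) (hs : 0 ≤ s) :
    volume (axisCube n c s) = ENNReal.ofReal (s ^ n) := by
  rw [axisCube_eq_preimage]
  rw [(EuclideanSpace.volume_preserving_symm_measurableEquiv_toLp (Fin n)).measure_preimage
    (MeasurableSet.univ_pi (fun i => measurableSet_Icc)).nullMeasurableSet]
  rw [volume_pi_pi]
  simp only [Real.volume_Icc]
  rw [Finset.prod_congr rfl (fun i _ => by rw [show c i + s/2 - (c i - s/2) = s by ring])]
  rw [Finset.prod_const, ENNReal.ofReal_pow hs]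
  simp

lemma measurableSet_axisCube (n : ℕ) (c : EuclideanSpace ℝ (Fin n)) (s : ℝ) :
    MeasurableSet (axisCube n c s) := by
  rw [axisCube_eq_preimage]
  exact (MeasurableEquiv.measurable _) (MeasurableSet.univ_pi (fun i => measurableSet_Icc))

lemma abs_coord_le_dist (n : ℕ) (x z : EuclideanSpace ℝ (Fin n)) (i : Fin n) :
    |x i - z i| ≤ dist x z := by
  rw [EuclideanSpace.dist_eq, ← Real.sqrt_sq_eq_abs]
  apply Real.sqrt_le_sqrt
  have h : (x i - z i) ^ 2 = dist (x i) (z i) ^ 2 := by rw [Real.dist_eq, sq_abs]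
  rw [h]
  exact Finset.single_le_sum (f := fun i => dist (x i) (z i) ^ 2)
    (fun i _ => sq_nonneg _) (Finset.mem_univ i)

lemma ball_subset_axisCube (n : ℕ) (z : EuclideanSpace ℝ (Fin n)) (r : ℝ) :
    ball z r ⊆ axisCube n z (2 * r) := by
  intro x hx i
  have h1 : |x i - z i| ≤ dist x z := abs_coord_le_dist n x z i
  have h2 : dist x z < r := mem_ball.mp hx
  rw [show 2 * r / 2 = r by ring]
  linarith

lemma dist_le_of_mem_axisCube (n : ℕ) (c : EuclideanSpace ℝ (Fin n)) (s : ℝ) (hs : 0 ≤ s)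
    {u v : EuclideanSpace ℝ (Fin n)} (hu : u ∈ axisCube n c s) (hv : v ∈ axisCube n c s) :
    dist u v ≤ Real.sqrt n * s := by
  rw [EuclideanSpace.dist_eq]
  have h : ∀ i, dist (u i) (v i) ^ 2 ≤ s ^ 2 := by
    intro i
    have h1 := hu i
    have h2 := hv i
    rw [Real.dist_eq]
    have habs : |u i - v i| ≤ s := by
      calc |u i - v i| ≤ |u i - c i| + |c i - v i| := abs_sub_le _ _ _
        _ ≤ s/2 + s/2 := add_le_add h1 (by rw [abs_sub_comm]; exact h2)
        _ = s := by ring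
    rw [sq_abs] at *
    rw [← sq_abs]
    exact pow_le_pow_left₀ (abs_nonneg _) habs 2
  calc Real.sqrt (∑ i, dist (u i) (v i) ^ 2)
      ≤ Real.sqrt (∑ _i : Fin n, s ^ 2) :=
        Real.sqrt_le_sqrt (Finset.sum_le_sum fun i _ => h i)
    _ = Real.sqrt ((n : ℝ) * s ^ 2) := by rw [Finset.sum_const]; simp [nsmul_eq_mul]
    _ = Real.sqrt n * s := by
        rw [Real.sqrt_mul (Nat.cast_nonneg n), Real.sqrt_sq hs]

lemma center_mem_axisCube (n : ℕ) (c : EuclideanSpace ℝ (Fin n)) (s : ℝ) (hs : 0 ≤ s) :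
    c ∈ axisCube n c s := by
  intro i; simp; linarith


lemma lowerSemicontinuous_measure_ball (μ : Measure X) (r : ℝ) :
    LowerSemicontinuous (fun x => μ (ball x r)) := by
  intro x₀ c hc
  -- μ (ball x₀ r) = ⨆ δ, μ (ball x₀ (r - δ)), continuity from below
  have hsup : Filter.Tendsto (fun k : ℕ => μ (ball x₀ (r - 1 / (k + 1))))
      Filter.atTop (nhds (μ (ball x₀ r))) := by
    have : ball x₀ r = ⋃ k : ℕ, ball x₀ (r - 1 / (k + 1)) := by
      ext z
      simp only [mem_ball, Set.mem_iUnion]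
      constructor
      · intro hz
        obtain ⟨k, hk⟩ := exists_nat_gt (1 / (r - dist z x₀))
        refine ⟨k, ?_⟩
        have hpos : 0 < r - dist z x₀ := by linarith
        have h1 : 1 / (r - dist z x₀) < k + 1 := by linarith [hk]
        have h2 : 1 / ((k : ℝ) + 1) < r - dist z x₀ := by
          rw [div_lt_iff₀ (by positivity)] at h1 ⊢
          · nlinarith
        linarith
      · rintro ⟨k, hk⟩
        have : 0 < 1 / ((k : ℝ) + 1) := by positivity
        linarith
    rw [this]
    apply MeasureTheory.tendsto_measure_iUnion_atTop
    intro a b hab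
    apply ball_subset_ball
    have : (1 : ℝ) / (b + 1) ≤ 1 / (a + 1) := by
      apply one_div_le_one_div_of_le (by positivity)
      exact_mod_cast add_le_add_left (Nat.cast_le.mpr hab) 1
    linarith
  have : ∀ᶠ k : ℕ in Filter.atTop, c < μ (ball x₀ (r - 1 / (k + 1))) :=
    hsup.eventually_const_lt hc
  obtain ⟨k, hk⟩ := this.exists
  filter_upwards [Metric.ball_mem_nhds x₀ (by positivity : (0:ℝ) < 1 / (k + 1))] with x hx
  · refine hk.trans_le (measure_mono ?_)
    intro z hz
    rw [mem_ball] at hz ⊢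
    calc dist z x ≤ dist z x₀ + dist x₀ x := dist_triangle _ _ _
      _ < r - 1 / (k + 1) + 1 / (k + 1) := by
          rw [dist_comm x₀ x]; exact add_lt_add hz (mem_ball.mp hx)
      _ = r := by ring

lemma lintegral_measure_ball_eq [SecondCountableTopology X]
    (μ ν : Measure X) [SFinite μ] [SFinite ν]
    (Q : Set X) (r : ℝ) :
    ∫⁻ x in Q, μ (ball x r) ∂ν = ∫⁻ z, ν.restrict Q (ball z r) ∂μ := by
  set S : Set (X × X) := {p | dist p.2 p.1 < r} with hS
  have hSmeas : MeasurableSet S :=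
    measurableSet_lt (measurable_snd.dist measurable_fst) measurable_const
  have key : ∀ x z : X, S.indicator (1 : X × X → ℝ≥0∞) (x, z) =
      (ball x r).indicator (1 : X → ℝ≥0∞) z := by
    intro x z
    by_cases h : dist z x < r <;> simp [Set.indicator_apply, hS, mem_ball, h]
  have h1 : ∀ x : X, μ (ball x r) = ∫⁻ z, S.indicator (1 : X × X → ℝ≥0∞) (x, z) ∂μ := by
    intro x
    simp_rw [key]
    rw [lintegral_indicator_one measurableSet_ball]
  have h2 : ∀ z : X, ν.restrict Q (ball z r) =
      ∫⁻ x, S.indicator (1 : X × X → ℝ≥0∞) (x, z) ∂(ν.restrict Q) := by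
    intro z
    have hkey2 : ∀ x : X, S.indicator (1 : X × X → ℝ≥0∞) (x, z) =
        (ball z r).indicator (1 : X → ℝ≥0∞) x := by
      intro x
      by_cases h : dist z x < r <;>
        simp [Set.indicator_apply, hS, mem_ball, dist_comm, h]
    simp_rw [hkey2]
    rw [lintegral_indicator_one measurableSet_ball]
  simp_rw [h1, h2]
  rw [lintegral_lintegral_swap]
  exact (measurable_const.indicator hSmeas).aemeasurable

end Helpers


def negEquiv (J : ℤ) : ℕ ≃ {j : ℤ // j ∈ {j : ℤ | j < J}} where
  toFun i := ⟨J - 1 - i, by simp only [Set.mem_setOf_eq]; omega⟩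
  invFun j := (J - 1 - j.1).toNat
  left_inv i := by simp
  right_inv j := by
    rcases j with ⟨j, hj⟩
    simp only [Set.mem_setOf_eq] at hj
    ext
    simp
    omega

lemma tsum_lt_geom (J : ℤ) (g : ℤ → ℝ≥0∞) (B ρ : ℝ≥0∞)
    (hg : ∀ i : ℕ, g (J - 1 - i) ≤ B * ρ ^ i) :
    ∑' (j : {j : ℤ | j < J}), g j ≤ B * (1 - ρ)⁻¹ := by
  rw [← (negEquiv J).tsum_eq (fun j => g j)]
  calc ∑' i : ℕ, g (J - 1 - i) ≤ ∑' i : ℕ, B * ρ ^ i := ENNReal.tsum_le_tsum hg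
    _ = B * ∑' i : ℕ, ρ ^ i := ENNReal.tsum_mul_left
    _ = B * (1 - ρ)⁻¹ := by rw [ENNReal.tsum_geometric]


lemma two_zpow_rpow (m : ℤ) (b : ℝ) : ((2:ℝ)^m) ^ b = (2:ℝ) ^ ((m:ℝ) * b) := by
  rw [← Real.rpow_intCast 2 m, ← Real.rpow_mul (by norm_num : (0:ℝ) ≤ 2)]

lemma two_zpow_npow (m : ℤ) (k : ℕ) : ((2:ℝ)^m) ^ k = (2:ℝ) ^ ((m:ℝ) * k) := by
  rw [← Real.rpow_natCast ((2:ℝ)^m) k, two_zpow_rpow]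

lemma pow2_div_identity (lam δ : ℝ) (hlam : lam ≠ 0) (hδ : δ ≠ 0) (A B P C : ℝ) :
    (2:ℝ)^A * (lam * (2:ℝ)^B) / (lam * (δ * (2:ℝ)^P) * (2:ℝ)^C)
      = (2:ℝ)^(A + B - P - C) / δ := by
  have h2 : ∀ u : ℝ, (2:ℝ)^u ≠ 0 := fun u => (Real.rpow_pos_of_pos two_pos u).ne'
  rw [show A + B - P - C = A + B + -P + -C by ring]
  rw [Real.rpow_add two_pos, Real.rpow_add two_pos, Real.rpow_add two_pos]
  rw [Real.rpow_neg (by norm_num : (0:ℝ) ≤ 2), Real.rpow_neg (by norm_num : (0:ℝ) ≤ 2)]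
  field_simp

set_option maxHeartbeats 4000000 in
/-- **Local good-λ estimate on Whitney cubes** (continuous case): there exist `τ > 1` and
`C, c > 0` so that for every cube `Q` of side `2^{j₀}` admitting a point `y` with
`dist(y, Q) ≤ 6√n ℓ(Q)` and `F(μ)(y) ≤ λ`, one has
`|{x ∈ Q : F(μ)(x) > τλ, M_α(μ)(x) ≤ ελ}| ≤ C e^{−c/ε^q} |Q|`. -/
theorem continuous_good_lambda_local (n : ℕ) (hn : 1 ≤ n) (α q : ℝ)
    (hα : 0 < α) (hαn : α < n) (hq : 0 < q) :
    ∃ τ C c : ℝ, 1 < τ ∧ 0 < C ∧ 0 < c ∧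
      ∀ (μ : Measure (EuclideanSpace ℝ (Fin n))), IsLocallyFiniteMeasure μ →
        ∀ lam ε : ℝ, 0 < lam → 0 < ε → ε < 1 →
          ∀ (center : EuclideanSpace ℝ (Fin n)) (j₀ : ℤ) (y : EuclideanSpace ℝ (Fin n)),
            Metric.infDist y (axisCube n center ((2 : ℝ) ^ j₀)) ≤
              6 * Real.sqrt n * (2 : ℝ) ^ j₀ →
            Fpot n α q μ y ≤ ENNReal.ofReal lam →
            volume {x ∈ axisCube n center ((2 : ℝ) ^ j₀) |
                ENNReal.ofReal (τ * lam) < Fpot n α q μ x ∧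
                Mfrac n α μ x ≤ ENNReal.ofReal (ε * lam)}
              ≤ ENNReal.ofReal (C * Real.exp (-c / ε ^ q)) *
                  volume (axisCube n center ((2 : ℝ) ^ j₀)) := by
  classical
  -- real constants
  set na : ℝ := (n : ℝ) - α with hna_def
  have hna : 0 < na := by simp only [hna_def]; linarith
  have h2lt : (1:ℝ) < 2 := one_lt_two
  set C₁ : ℝ := (2:ℝ) ^ (na * q) with hC₁_def
  have hC₁ : 0 < C₁ := Real.rpow_pos_of_pos two_pos _
  set τ : ℝ := (3 + C₁) ^ (1/q) with hτ_def
  have hτq : τ ^ q = 3 + C₁ := by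
    rw [hτ_def, ← Real.rpow_mul (by linarith), one_div_mul_cancel hq.ne', Real.rpow_one]
  have hτ : 1 < τ := by
    rw [hτ_def]
    rw [Real.one_lt_rpow_iff_of_pos (by linarith)]
    left
    constructor
    · linarith
    · positivity
  have hτpos : 0 < τ := lt_trans one_pos hτ
  set θq : ℝ := (2:ℝ) ^ (-(q * (α/2))) with hθq_def
  have hθq0 : 0 < θq := Real.rpow_pos_of_pos two_pos _
  have hθq1 : θq < 1 := by
    rw [hθq_def]
    apply Real.rpow_lt_one_of_one_lt_of_neg h2lt
    have : 0 < q * (α/2) := by positivity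
    linarith
  set δ' : ℝ := (1 - θq) ^ (1/q) with hδ'_def
  have hδ'0 : 0 < δ' := Real.rpow_pos_of_pos (by linarith) _
  have hδ'q : δ' ^ q = 1 - θq := by
    rw [hδ'_def, ← Real.rpow_mul (by linarith), one_div_mul_cancel hq.ne', Real.rpow_one]
  set θh : ℝ := (2:ℝ) ^ (-(α/2)) with hθh_def
  have hθh0 : 0 < θh := Real.rpow_pos_of_pos two_pos _
  have hθh1 : θh < 1 := by
    rw [hθh_def]
    apply Real.rpow_lt_one_of_one_lt_of_neg h2lt
    linarith
  set Cbig : ℝ := (2:ℝ) ^ (((n:ℝ)+3)*(n:ℝ) + 2*(n:ℝ) - α) / (δ' * (1 - θh)) with hCbig_def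
  have hCbig : 0 < Cbig := by
    apply div_pos (Real.rpow_pos_of_pos two_pos _)
    apply mul_pos hδ'0
    linarith
  set cc : ℝ := α * Real.log 2 with hcc_def
  have hccpos : 0 < cc := mul_pos hα (Real.log_pos h2lt)
  refine ⟨τ, Cbig, cc, hτ, hCbig, hccpos, ?_⟩
  intro μ hμ lam ε hlam hε hε1 center j₀ y hinf hFy
  haveI : IsLocallyFiniteMeasure μ := hμ
  haveI : SigmaFinite μ := by infer_instance
  -- scales
  set s : ℝ := (2:ℝ) ^ j₀ with hs_def
  have hs : 0 < s := zpow_pos two_pos _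
  set Qc : Set (EuclideanSpace ℝ (Fin n)) := axisCube n center s with hQc_def
  set j₂ : ℤ := j₀ + (n : ℤ) + 3 with hj₂_def
  have hεq : 0 < ε ^ q := Real.rpow_pos_of_pos hε _
  have hεq1 : ε ^ q < 1 := Real.rpow_lt_one hε.le hε1 hq
  set Nr : ℝ := (ε ^ q)⁻¹ with hNr_def
  have hNr1 : 1 < Nr := (one_lt_inv₀ hεq).mpr hεq1
  set N : ℕ := ⌊Nr⌋₊ with hN_def
  have hN1 : 1 ≤ N := Nat.le_floor (by exact_mod_cast hNr1.le)
  have hNle : (N:ℝ) ≤ Nr := Nat.floor_le (by positivity)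
  have hNgt : Nr < N + 1 := Nat.lt_floor_add_one Nr
  set J : ℤ := j₂ - N with hJ_def
  have hJj₂ : J ≤ j₂ - 1 := by
    rw [hJ_def]; omega
  -- geometry: all points of the cube are 2^{j₂}-close to y
  have hsqn1 : (1:ℝ) ≤ Real.sqrt n := by
    rw [show (1:ℝ) = Real.sqrt 1 by simp]
    exact Real.sqrt_le_sqrt (by exact_mod_cast hn)
  have hyQ : ∀ x ∈ Qc, dist x y ≤ (2:ℝ) ^ j₂ := by
    intro x hx
    have hne : Qc.Nonempty := ⟨center, center_mem_axisCube n center s hs.le⟩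
    have hlt : Metric.infDist y Qc < 6 * Real.sqrt n * s + s := by
      apply lt_of_le_of_lt hinf
      linarith
    obtain ⟨z, hzQ, hz⟩ := (Metric.infDist_lt_iff hne).mp hlt
    have h1 : dist x z ≤ Real.sqrt n * s :=
      dist_le_of_mem_axisCube n center s hs.le hx hzQ
    have h2 : dist x y ≤ dist x z + dist z y := dist_triangle x z y
    have hsn : Real.sqrt n ≤ (n:ℝ) := by
      have hn1 : (1:ℝ) ≤ (n:ℝ) := by exact_mod_cast hn
      calc Real.sqrt n ≤ Real.sqrt ((n:ℝ)^2) := Real.sqrt_le_sqrt (by nlinarith)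
        _ = (n:ℝ) := Real.sqrt_sq (by positivity)
    have hn2 : (n:ℝ) ≤ 2 ^ n := by
      exact_mod_cast (Nat.lt_two_pow_self (n := n)).le
    have hj₂eq : (2:ℝ) ^ j₂ = 2 ^ n * 8 * s := by
      rw [hj₂_def, hs_def]
      rw [show j₀ + (n:ℤ) + 3 = ((n:ℤ) + 3) + j₀ by ring]
      rw [zpow_add₀ (two_ne_zero), zpow_add₀ (two_ne_zero)]
      rw [zpow_natCast]
      norm_num
    have hfin : dist x y ≤ (8 * Real.sqrt n) * s := by
      have : dist z y ≤ 6 * Real.sqrt n * s + s := by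
        rw [dist_comm]; linarith
      have hss : s ≤ Real.sqrt n * s := le_mul_of_one_le_left hs.le hsqn1
      linarith
    calc dist x y ≤ (8 * Real.sqrt n) * s := hfin
      _ ≤ 2 ^ n * 8 * s := by
          have h8 : 8 * Real.sqrt n ≤ 2 ^ n * 8 := by linarith
          exact mul_le_mul_of_nonneg_right h8 hs.le
      _ = (2:ℝ) ^ j₂ := hj₂eq.symm
  -- denominators
  have hdpos : ∀ j : ℤ, (0:ℝ) < ((2:ℝ)^j) ^ ((n:ℝ) - α) :=
    fun j => Real.rpow_pos_of_pos (zpow_pos two_pos _) _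
  have hd0 : ∀ j : ℤ, ENNReal.ofReal (((2:ℝ)^j) ^ ((n:ℝ) - α)) ≠ 0 :=
    fun j => (ENNReal.ofReal_pos.mpr (hdpos j)).ne'
  have hdT : ∀ j : ℤ, ENNReal.ofReal (((2:ℝ)^j) ^ ((n:ℝ) - α)) ≠ ⊤ :=
    fun j => ENNReal.ofReal_ne_top
  -- the dyadic annuli terms
  set a : EuclideanSpace ℝ (Fin n) → ℤ → ℝ≥0∞ := fun x j =>
    μ (Metric.ball x ((2:ℝ)^j)) / ENNReal.ofReal (((2:ℝ)^j) ^ ((n:ℝ) - α)) with ha_def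
  have hFx : ∀ x, Fpot n α q μ x = (∑' j : ℤ, (a x j) ^ q) ^ (1/q) := fun x => rfl
  -- control from F(y) ≤ lam
  have hFy' : ∑' j : ℤ, (a y j) ^ q ≤ ENNReal.ofReal (lam ^ q) := by
    have h1 := ENNReal.rpow_le_rpow (hFx y ▸ hFy) hq.le
    rw [← ENNReal.rpow_mul, one_div_mul_cancel hq.ne', ENNReal.rpow_one] at h1
    rwa [← ENNReal.ofReal_rpow_of_pos hlam]
  have hay : ∀ j : ℤ, a y j ≤ ENNReal.ofReal lam := by
    intro j
    have h1 : (a y j) ^ q ≤ ENNReal.ofReal (lam ^ q) := le_trans (ENNReal.le_tsum j) hFy'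
    rw [← ENNReal.ofReal_rpow_of_pos hlam] at h1
    exact (ENNReal.rpow_le_rpow_iff hq).mp h1
  have hμW : μ (Metric.ball y ((2:ℝ)^(j₂+1))) ≤
      ENNReal.ofReal (lam * ((2:ℝ)^(j₂+1)) ^ ((n:ℝ) - α)) := by
    have h1 := hay (j₂ + 1)
    rw [ha_def] at h1
    rw [ENNReal.div_le_iff (hd0 _) (hdT _)] at h1
    rwa [← ENNReal.ofReal_mul hlam.le] at h1
  -- geometric-weight thresholds at small scales
  set p : ℤ → ℝ := fun j => ((j:ℝ) - (J:ℝ) + 1) * (α/2) with hp_def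
  set T : ℤ → ℝ := fun j => lam * (δ' * (2:ℝ) ^ p j) * (((2:ℝ)^j) ^ ((n:ℝ) - α))
    with hT_def
  have hT0 : ∀ j, 0 < T j := by
    intro j
    apply mul_pos (mul_pos hlam (mul_pos hδ'0 (Real.rpow_pos_of_pos two_pos _))) (hdpos j)
  -- MAIN INCLUSION
  have hsub : {x ∈ Qc | ENNReal.ofReal (τ * lam) < Fpot n α q μ x ∧
      Mfrac n α μ x ≤ ENNReal.ofReal (ε * lam)} ⊆
      ⋃ (j : {j : ℤ | j < J}),
        ({x | ENNReal.ofReal (T j) < μ (Metric.ball x ((2:ℝ)^(j:ℤ)))} ∩ Qc) := by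
    intro x hx
    obtain ⟨hxQ, hxF, hxM⟩ := hx
    by_contra hcon
    simp only [Set.mem_iUnion, not_exists] at hcon
    have hball : ∀ j : ℤ, j < J → μ (Metric.ball x ((2:ℝ)^j)) ≤ ENNReal.ofReal (T j) := by
      intro j hj
      by_contra hb
      push_neg at hb
      exact hcon ⟨j, hj⟩ ⟨hb, hxQ⟩
    -- tail estimate
    have htail : ∀ j : ℤ, j₂ ≤ j →
        (a x j) ^ q ≤ ENNReal.ofReal C₁ * (a y (j+1)) ^ q := by
      intro j hj
      have hbsub : Metric.ball x ((2:ℝ)^j) ⊆ Metric.ball y ((2:ℝ)^(j+1)) := by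
        intro w hw
        rw [Metric.mem_ball] at hw ⊢
        have h1 : dist x y ≤ (2:ℝ)^j₂ := hyQ x hxQ
        have h2 : (2:ℝ)^j₂ ≤ (2:ℝ)^j := by
          apply zpow_le_zpow_right₀ one_le_two hj
        calc dist w y ≤ dist w x + dist x y := dist_triangle w x y
          _ < (2:ℝ)^j + (2:ℝ)^j := by linarith
          _ = (2:ℝ)^(j+1) := by rw [zpow_add₀ two_ne_zero, zpow_one]; ring
      have hdd : ENNReal.ofReal (((2:ℝ)^(j+1)) ^ ((n:ℝ)-α))
          = ENNReal.ofReal ((2:ℝ)^((n:ℝ)-α)) * ENNReal.ofReal (((2:ℝ)^j) ^ ((n:ℝ)-α)) := by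
        rw [← ENNReal.ofReal_mul (by positivity)]
        congr 1
        rw [zpow_add₀ two_ne_zero, zpow_one, mul_comm ((2:ℝ)^j) 2]
        rw [← Real.mul_rpow (by norm_num) (zpow_pos two_pos j).le]
      have hc0 : ENNReal.ofReal ((2:ℝ)^((n:ℝ)-α)) ≠ 0 :=
        (ENNReal.ofReal_pos.mpr (Real.rpow_pos_of_pos two_pos _)).ne'
      have hc0T : ENNReal.ofReal ((2:ℝ)^((n:ℝ)-α)) ≠ ⊤ := ENNReal.ofReal_ne_top
      have key : a x j ≤ ENNReal.ofReal ((2:ℝ)^((n:ℝ)-α)) * a y (j+1) := by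
        have hmono : μ (Metric.ball x ((2:ℝ)^j)) ≤ μ (Metric.ball y ((2:ℝ)^(j+1))) :=
          measure_mono hbsub
        have step1 : a x j ≤ μ (Metric.ball y ((2:ℝ)^(j+1))) /
            ENNReal.ofReal (((2:ℝ)^j) ^ ((n:ℝ)-α)) :=
          ENNReal.div_le_div_right hmono _
        have step2 : ENNReal.ofReal ((2:ℝ)^((n:ℝ)-α)) * a y (j+1) =
            μ (Metric.ball y ((2:ℝ)^(j+1))) / ENNReal.ofReal (((2:ℝ)^j) ^ ((n:ℝ)-α)) := by
          show ENNReal.ofReal ((2:ℝ)^((n:ℝ)-α)) *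
              (μ (Metric.ball y ((2:ℝ)^(j+1))) / ENNReal.ofReal (((2:ℝ)^(j+1)) ^ ((n:ℝ)-α))) = _
          rw [hdd, ← mul_div_assoc]
          exact ENNReal.mul_div_mul_left _ _ hc0 hc0T
        rw [step2]
        exact step1
      calc (a x j) ^ q ≤ (ENNReal.ofReal ((2:ℝ)^((n:ℝ)-α)) * a y (j+1)) ^ q :=
            ENNReal.rpow_le_rpow key hq.le
        _ = (ENNReal.ofReal ((2:ℝ)^((n:ℝ)-α))) ^ q * (a y (j+1)) ^ q :=
            ENNReal.mul_rpow_of_nonneg _ _ hq.le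
        _ = ENNReal.ofReal C₁ * (a y (j+1)) ^ q := by
            rw [ENNReal.ofReal_rpow_of_pos (Real.rpow_pos_of_pos two_pos _)]
            rw [← Real.rpow_mul (by norm_num : (0:ℝ) ≤ 2)]
    -- middle estimate
    have hmid : ∀ j : ℤ, a x j ≤ ENNReal.ofReal (ε * lam) := by
      intro j
      refine le_trans ?_ hxM
      exact le_iSup₂ (f := fun (r:ℝ) (_ : 0 < r) =>
        μ (Metric.ball x r) / ENNReal.ofReal (r ^ ((n:ℝ)-α))) ((2:ℝ)^j) (zpow_pos two_pos j)
    -- small-scale estimate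
    have hsmall : ∀ j : ℤ, j < J → a x j ≤ ENNReal.ofReal (lam * (δ' * (2:ℝ) ^ p j)) := by
      intro j hj
      have h1 : a x j = μ (Metric.ball x ((2:ℝ)^j)) /
          ENNReal.ofReal (((2:ℝ)^j) ^ ((n:ℝ)-α)) := rfl
      rw [h1, ENNReal.div_le_iff (hd0 j) (hdT j), ← ENNReal.ofReal_mul (by positivity)]
      exact hball j hj
    -- pointwise domination
    set G : ℤ → ℝ≥0∞ := fun j =>
      ({j : ℤ | j₂ ≤ j}.indicator (fun j => ENNReal.ofReal C₁ * (a y (j+1)) ^ q) j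
        + (Set.Ico J j₂).indicator (fun _ => ENNReal.ofReal ((ε*lam) ^ q)) j)
        + {j : ℤ | j < J}.indicator
            (fun j => ENNReal.ofReal ((lam * (δ' * (2:ℝ) ^ p j)) ^ q)) j with hG_def
    have hpt : ∀ j : ℤ, (a x j) ^ q ≤ G j := by
      intro j
      rcases lt_or_ge j J with h | h
      · have h3 : {j : ℤ | j < J}.indicator
            (fun j => ENNReal.ofReal ((lam * (δ' * (2:ℝ) ^ p j)) ^ q)) j
            = ENNReal.ofReal ((lam * (δ' * (2:ℝ) ^ p j)) ^ q) :=
            Set.indicator_of_mem (show j ∈ {j : ℤ | j < J} from h) _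
        calc (a x j) ^ q ≤ (ENNReal.ofReal (lam * (δ' * (2:ℝ) ^ p j))) ^ q :=
              ENNReal.rpow_le_rpow (hsmall j h) hq.le
          _ = ENNReal.ofReal ((lam * (δ' * (2:ℝ) ^ p j)) ^ q) :=
              ENNReal.ofReal_rpow_of_pos (by positivity)
          _ ≤ G j := by rw [hG_def]; simp only []; rw [h3]; exact le_add_self
      · rcases lt_or_ge j j₂ with h2 | h2
        · have h3 : (Set.Ico J j₂).indicator
              (fun _ => ENNReal.ofReal ((ε*lam) ^ q)) j
              = ENNReal.ofReal ((ε*lam) ^ q) :=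
              Set.indicator_of_mem (show j ∈ Set.Ico J j₂ from ⟨h, h2⟩) _
          calc (a x j) ^ q ≤ (ENNReal.ofReal (ε * lam)) ^ q :=
                ENNReal.rpow_le_rpow (hmid j) hq.le
            _ = ENNReal.ofReal ((ε*lam) ^ q) :=
                ENNReal.ofReal_rpow_of_pos (by positivity)
            _ ≤ G j := by
                rw [hG_def]; simp only []; rw [h3]
                exact le_trans le_add_self le_self_add
        · have h3 : {j : ℤ | j₂ ≤ j}.indicator
              (fun j => ENNReal.ofReal C₁ * (a y (j+1)) ^ q) j
              = ENNReal.ofReal C₁ * (a y (j+1)) ^ q :=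
              Set.indicator_of_mem (show j ∈ {j : ℤ | j₂ ≤ j} from h2) _
          calc (a x j) ^ q ≤ ENNReal.ofReal C₁ * (a y (j+1)) ^ q := htail j h2
            _ ≤ G j := by
                rw [hG_def]; simp only []; rw [h3]
                exact le_trans le_self_add le_self_add
    -- summing the three parts
    have hS1 : ∑' j : ℤ, {j : ℤ | j₂ ≤ j}.indicator
        (fun j => ENNReal.ofReal C₁ * (a y (j+1)) ^ q) j
        ≤ ENNReal.ofReal C₁ * ENNReal.ofReal (lam ^ q) := by
      rw [← tsum_subtype]
      rw [ENNReal.tsum_mul_left]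
      apply mul_le_mul_right
      have hinj : Function.Injective (fun (j : {j : ℤ | j₂ ≤ j}) => (j:ℤ)+1) := by
        intro u v huv
        apply Subtype.ext
        simpa using huv
      calc ∑' (j : {j : ℤ | j₂ ≤ j}), (a y ((j:ℤ)+1)) ^ q
          ≤ ∑' j : ℤ, (a y j) ^ q :=
            tsum_comp_le_tsum_of_injective hinj (fun j => (a y j) ^ q)
        _ ≤ ENNReal.ofReal (lam ^ q) := hFy'
    have hS2 : ∑' j : ℤ, (Set.Ico J j₂).indicator
        (fun _ => ENNReal.ofReal ((ε*lam) ^ q)) j ≤ ENNReal.ofReal (lam ^ q) := by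
      have hvanish : ∀ j ∉ Finset.Ico J j₂, (Set.Ico J j₂).indicator
          (fun _ => ENNReal.ofReal ((ε*lam) ^ q)) j = 0 := by
        intro j hj
        apply Set.indicator_of_notMem
        simp only [Finset.mem_Ico] at hj
        simp only [Set.mem_Ico]
        exact hj
      rw [tsum_eq_sum hvanish]
      have hval : ∀ j ∈ Finset.Ico J j₂, (Set.Ico J j₂).indicator
          (fun _ => ENNReal.ofReal ((ε*lam) ^ q)) j = ENNReal.ofReal ((ε*lam) ^ q) := by
        intro j hj
        apply Set.indicator_of_mem
        simp only [Finset.mem_Ico] at hj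
        simp only [Set.mem_Ico]
        exact hj
      rw [Finset.sum_congr rfl hval, Finset.sum_const, Int.card_Ico]
      have hcount : (j₂ - J).toNat = N := by rw [hJ_def]; omega
      rw [hcount, nsmul_eq_mul]
      rw [show ((N:ℕ):ℝ≥0∞) = ENNReal.ofReal (N:ℝ) by rw [ENNReal.ofReal_natCast]]
      rw [← ENNReal.ofReal_mul (by positivity)]
      apply ENNReal.ofReal_le_ofReal
      rw [Real.mul_rpow hε.le hlam.le]
      calc (N:ℝ) * (ε^q * lam^q) ≤ Nr * (ε^q * lam^q) := by
            apply mul_le_mul_of_nonneg_right hNle (by positivity)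
        _ = lam^q := by rw [hNr_def]; field_simp
    have hS3 : ∑' j : ℤ, {j : ℤ | j < J}.indicator
        (fun j => ENNReal.ofReal ((lam * (δ' * (2:ℝ) ^ p j)) ^ q)) j
        ≤ ENNReal.ofReal (lam ^ q) := by
      rw [← tsum_subtype]
      have hg : ∀ i : ℕ, ENNReal.ofReal ((lam * (δ' * (2:ℝ) ^ p (J-1-i))) ^ q)
          ≤ ENNReal.ofReal (lam^q * (1-θq)) * (ENNReal.ofReal θq) ^ i := by
        intro i
        have hp' : p (J - 1 - i) = -(i : ℝ) * (α/2) := by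
          rw [hp_def]; push_cast; ring
        have hreal : (lam * (δ' * (2:ℝ) ^ p (J-1-i)))^q = lam^q * (1-θq) * θq ^ i := by
          rw [hp']
          rw [Real.mul_rpow hlam.le (by positivity), Real.mul_rpow hδ'0.le (by positivity)]
          rw [hδ'q]
          have hθi : ((2:ℝ) ^ (-(i : ℝ) * (α/2))) ^ q = θq ^ i := by
            rw [← Real.rpow_natCast θq i, hθq_def]
            rw [← Real.rpow_mul (by norm_num : (0:ℝ) ≤ 2),
              ← Real.rpow_mul (by norm_num : (0:ℝ) ≤ 2)]
            congr 1
            ring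
          rw [hθi]
          ring
        rw [hreal, ENNReal.ofReal_mul
          (mul_nonneg (Real.rpow_pos_of_pos hlam q).le (by linarith)),
          ENNReal.ofReal_pow hθq0.le]
      refine le_trans (tsum_lt_geom J
        (fun j => ENNReal.ofReal ((lam * (δ' * (2:ℝ) ^ p j)) ^ q))
        (ENNReal.ofReal (lam^q * (1-θq))) (ENNReal.ofReal θq) hg) ?_
      have h1m : (1:ℝ≥0∞) - ENNReal.ofReal θq = ENNReal.ofReal (1 - θq) := by
        rw [ENNReal.ofReal_sub 1 hθq0.le, ENNReal.ofReal_one]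
      rw [h1m, ENNReal.ofReal_mul (Real.rpow_pos_of_pos hlam q).le, mul_assoc,
        ENNReal.mul_inv_cancel (ENNReal.ofReal_pos.mpr (by linarith)).ne'
          ENNReal.ofReal_ne_top, mul_one]
    have htotal : ∑' j : ℤ, (a x j) ^ q ≤ ENNReal.ofReal ((C₁ + 2) * lam ^ q) := by
      calc ∑' j : ℤ, (a x j) ^ q ≤ ∑' j : ℤ, G j := ENNReal.tsum_le_tsum hpt
        _ = (∑' j : ℤ, ({j : ℤ | j₂ ≤ j}.indicator
              (fun j => ENNReal.ofReal C₁ * (a y (j+1)) ^ q) j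
              + (Set.Ico J j₂).indicator (fun _ => ENNReal.ofReal ((ε*lam) ^ q)) j))
            + ∑' j : ℤ, {j : ℤ | j < J}.indicator
              (fun j => ENNReal.ofReal ((lam * (δ' * (2:ℝ) ^ p j)) ^ q)) j := by
            rw [hG_def]
            exact ENNReal.tsum_add
        _ = (∑' j : ℤ, {j : ℤ | j₂ ≤ j}.indicator
              (fun j => ENNReal.ofReal C₁ * (a y (j+1)) ^ q) j
              + ∑' j : ℤ, (Set.Ico J j₂).indicator
                (fun _ => ENNReal.ofReal ((ε*lam) ^ q)) j)
            + ∑' j : ℤ, {j : ℤ | j < J}.indicator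
              (fun j => ENNReal.ofReal ((lam * (δ' * (2:ℝ) ^ p j)) ^ q)) j := by
            rw [ENNReal.tsum_add]
        _ ≤ (ENNReal.ofReal C₁ * ENNReal.ofReal (lam ^ q) + ENNReal.ofReal (lam ^ q))
            + ENNReal.ofReal (lam ^ q) := by
            exact add_le_add (add_le_add hS1 hS2) hS3
        _ = ENNReal.ofReal ((C₁ + 2) * lam ^ q) := by
            rw [← ENNReal.ofReal_mul hC₁.le, ← ENNReal.ofReal_add (by positivity) (by positivity),
              ← ENNReal.ofReal_add (by positivity) (by positivity)]
            congr 1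
            ring
    have hlow : ENNReal.ofReal ((3 + C₁) * lam ^ q) < ∑' j : ℤ, (a x j) ^ q := by
      have hxF' : ENNReal.ofReal (τ * lam) < (∑' j : ℤ, (a x j) ^ q) ^ (1/q) := by
        rw [← hFx x]; exact hxF
      have h1 := ENNReal.rpow_lt_rpow hxF' hq
      rw [← ENNReal.rpow_mul, one_div_mul_cancel hq.ne', ENNReal.rpow_one] at h1
      rw [ENNReal.ofReal_rpow_of_pos (by positivity)] at h1
      rw [Real.mul_rpow hτpos.le hlam.le, hτq] at h1
      exact h1
    have hcontr := lt_of_lt_of_le hlow htotal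
    have h2 := (ENNReal.ofReal_lt_ofReal_iff (by positivity)).mp hcontr
    have hlq : 0 < lam ^ q := Real.rpow_pos_of_pos hlam q
    nlinarith
  -- PER-SCALE MARKOV BOUND
  have hEj : ∀ j : ℤ, j < J →
      volume ({x | ENNReal.ofReal (T j) < μ (Metric.ball x ((2:ℝ)^j))} ∩ Qc) ≤
        ENNReal.ofReal ((2*(2:ℝ)^j)^n * (lam * ((2:ℝ)^(j₂+1)) ^ ((n:ℝ) - α)) / T j) := by
    intro j hj
    have hr : (0:ℝ) < (2:ℝ)^j := zpow_pos two_pos j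
    have hQmeas : MeasurableSet Qc := measurableSet_axisCube n center s
    have hrestr : volume ({x | ENNReal.ofReal (T j) < μ (Metric.ball x ((2:ℝ)^j))} ∩ Qc)
        = (volume.restrict Qc) {x | ENNReal.ofReal (T j) < μ (Metric.ball x ((2:ℝ)^j))} :=
      (Measure.restrict_apply' hQmeas).symm
    rw [hrestr]
    have hmono : (volume.restrict Qc) {x | ENNReal.ofReal (T j) < μ (Metric.ball x ((2:ℝ)^j))}
        ≤ (volume.restrict Qc) {x | ENNReal.ofReal (T j) ≤ μ (Metric.ball x ((2:ℝ)^j))} :=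
      measure_mono (Set.setOf_subset_setOf.mpr (fun x => le_of_lt))
    have hmeas : AEMeasurable (fun x => μ (Metric.ball x ((2:ℝ)^j))) (volume.restrict Qc) :=
      ((lowerSemicontinuous_measure_ball μ ((2:ℝ)^j)).measurable).aemeasurable
    have hmarkov := MeasureTheory.meas_ge_le_lintegral_div hmeas
      (ENNReal.ofReal_pos.mpr (hT0 j)).ne' ENNReal.ofReal_ne_top
    refine le_trans (le_trans hmono hmarkov) ?_
    -- bound the integral
    have hfub := lintegral_measure_ball_eq μ volume Qc ((2:ℝ)^j)
    have hptb : ∀ z : EuclideanSpace ℝ (Fin n), volume.restrict Qc (Metric.ball z ((2:ℝ)^j))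
        ≤ (Metric.ball y ((2:ℝ)^(j₂+1))).indicator
            (fun _ => ENNReal.ofReal ((2*(2:ℝ)^j)^n)) z := by
      intro z
      by_cases hz : z ∈ Metric.ball y ((2:ℝ)^(j₂+1))
      · rw [Set.indicator_of_mem hz]
        calc volume.restrict Qc (Metric.ball z ((2:ℝ)^j))
            ≤ volume (Metric.ball z ((2:ℝ)^j)) := Measure.restrict_le_self _
          _ ≤ volume (axisCube n z (2*(2:ℝ)^j)) :=
              measure_mono (ball_subset_axisCube n z ((2:ℝ)^j))
          _ = ENNReal.ofReal ((2*(2:ℝ)^j)^n) := volume_axisCube n z _ (by positivity)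
      · rw [Set.indicator_of_notMem hz]
        rw [Measure.restrict_apply' hQmeas]
        have hempty : Metric.ball z ((2:ℝ)^j) ∩ Qc = ∅ := by
          rw [Set.eq_empty_iff_forall_notMem]
          rintro w ⟨hw1, hw2⟩
          apply hz
          rw [Metric.mem_ball]
          have h1 : dist w z < (2:ℝ)^j := Metric.mem_ball.mp hw1
          have h2 : dist w y ≤ (2:ℝ)^j₂ := hyQ w hw2
          have h3 : (2:ℝ)^j ≤ (2:ℝ)^j₂ :=
            zpow_le_zpow_right₀ one_le_two (by omega)
          calc dist z y ≤ dist z w + dist w y := dist_triangle z w y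
            _ < (2:ℝ)^j + (2:ℝ)^j₂ := by
                rw [dist_comm z w]; exact add_lt_add_of_lt_of_le h1 h2
            _ ≤ (2:ℝ)^j₂ + (2:ℝ)^j₂ := by linarith
            _ = (2:ℝ)^(j₂+1) := by rw [zpow_add_one₀ two_ne_zero]; ring
        rw [hempty]
        simp
    have hint : ∫⁻ x in Qc, μ (Metric.ball x ((2:ℝ)^j)) ∂volume
        ≤ ENNReal.ofReal ((2*(2:ℝ)^j)^n * (lam * ((2:ℝ)^(j₂+1)) ^ ((n:ℝ) - α))) := by
      rw [hfub]
      calc ∫⁻ z, volume.restrict Qc (Metric.ball z ((2:ℝ)^j)) ∂μ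
          ≤ ∫⁻ z, (Metric.ball y ((2:ℝ)^(j₂+1))).indicator
              (fun _ => ENNReal.ofReal ((2*(2:ℝ)^j)^n)) z ∂μ := lintegral_mono hptb
        _ = ENNReal.ofReal ((2*(2:ℝ)^j)^n) * μ (Metric.ball y ((2:ℝ)^(j₂+1))) :=
            lintegral_indicator_const measurableSet_ball _
        _ ≤ ENNReal.ofReal ((2*(2:ℝ)^j)^n) *
            ENNReal.ofReal (lam * ((2:ℝ)^(j₂+1)) ^ ((n:ℝ) - α)) :=
            mul_le_mul_right hμW _
        _ = ENNReal.ofReal ((2*(2:ℝ)^j)^n * (lam * ((2:ℝ)^(j₂+1)) ^ ((n:ℝ) - α))) :=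
            (ENNReal.ofReal_mul (by positivity)).symm
    calc (∫⁻ x, μ (Metric.ball x ((2:ℝ)^j)) ∂(volume.restrict Qc)) / ENNReal.ofReal (T j)
        ≤ ENNReal.ofReal ((2*(2:ℝ)^j)^n * (lam * ((2:ℝ)^(j₂+1)) ^ ((n:ℝ) - α)))
            / ENNReal.ofReal (T j) := ENNReal.div_le_div_right hint _
      _ = ENNReal.ofReal ((2*(2:ℝ)^j)^n * (lam * ((2:ℝ)^(j₂+1)) ^ ((n:ℝ) - α)) / T j) := by
          rw [ENNReal.ofReal_div_of_pos (hT0 j)]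
  -- SUMMATION
  have hsum : ∑' (j : {j : ℤ | j < J}),
      ENNReal.ofReal ((2*(2:ℝ)^(j:ℤ))^n * (lam * ((2:ℝ)^(j₂+1)) ^ ((n:ℝ) - α)) / T j) ≤
      ENNReal.ofReal (Cbig * Real.exp (-cc / ε ^ q)) * ENNReal.ofReal (s ^ n) := by
    set W0 : ℝ := (J:ℝ)*(n:ℝ) + ((j₂:ℝ) + 2 - (J:ℝ)) * ((n:ℝ) - α) with hW0_def
    have hg : ∀ i : ℕ,
        (fun j : ℤ => ENNReal.ofReal ((2*(2:ℝ)^j)^n *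
          (lam * ((2:ℝ)^(j₂+1)) ^ ((n:ℝ) - α)) / T j)) (J - 1 - i)
        ≤ ENNReal.ofReal ((2:ℝ)^W0 / δ') * (ENNReal.ofReal θh) ^ i := by
      intro i
      simp only []
      apply le_of_eq
      rw [← ENNReal.ofReal_pow hθh0.le, ← ENNReal.ofReal_mul (by positivity)]
      congr 1
      have e1 : (2*(2:ℝ)^(J-1-(i:ℤ)))^n = (2:ℝ) ^ ((((J:ℝ)-(i:ℝ))) * n) := by
        rw [show 2*(2:ℝ)^(J-1-(i:ℤ)) = (2:ℝ)^(J-(i:ℤ)) by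
          rw [show (J:ℤ)-(i:ℤ) = (J-1-(i:ℤ)) + 1 by ring, zpow_add_one₀ two_ne_zero]; ring]
        rw [two_zpow_npow]
        congr 1
        push_cast
        ring
      have e2 : ((2:ℝ)^(j₂+1)) ^ ((n:ℝ)-α) = (2:ℝ) ^ (((j₂:ℝ)+1) * ((n:ℝ)-α)) := by
        rw [two_zpow_rpow]
        congr 1
        push_cast
        ring
      have e3 : ((2:ℝ)^((J:ℤ)-1-(i:ℤ))) ^ ((n:ℝ)-α)
          = (2:ℝ) ^ (((J:ℝ)-1-(i:ℝ)) * ((n:ℝ)-α)) := by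
        rw [two_zpow_rpow]
        congr 1
        push_cast
        ring
      have e4 : θh ^ i = (2:ℝ) ^ (-(α/2) * (i:ℝ)) := by
        rw [← Real.rpow_natCast θh i, hθh_def,
          ← Real.rpow_mul (by norm_num : (0:ℝ) ≤ 2)]
      have hp' : p (J-1-(i:ℤ)) = -(i:ℝ) * (α/2) := by
        rw [hp_def]; push_cast; ring
      have hTv : T (J-1-(i:ℤ)) = lam * (δ' * (2:ℝ)^(-(i:ℝ) * (α/2))) *
          (2:ℝ) ^ (((J:ℝ)-1-(i:ℝ)) * ((n:ℝ)-α)) := by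
        rw [hT_def]
        simp only []
        rw [hp', e3]
      rw [e1, e2, hTv, pow2_div_identity lam δ' hlam.ne' hδ'0.ne', e4]
      rw [div_mul_eq_mul_div, ← Real.rpow_add two_pos]
      congr 2
      rw [hW0_def]
      push_cast
      ring
    refine le_trans (tsum_lt_geom J
      (fun j : ℤ => ENNReal.ofReal ((2*(2:ℝ)^j)^n *
        (lam * ((2:ℝ)^(j₂+1)) ^ ((n:ℝ) - α)) / T j))
      (ENNReal.ofReal ((2:ℝ)^W0 / δ')) (ENNReal.ofReal θh) hg) ?_
    have h1m : (1:ℝ≥0∞) - ENNReal.ofReal θh = ENNReal.ofReal (1 - θh) := by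
      rw [ENNReal.ofReal_sub 1 hθh0.le, ENNReal.ofReal_one]
    rw [h1m, ← ENNReal.ofReal_inv_of_pos (by linarith : (0:ℝ) < 1 - θh),
      ← ENNReal.ofReal_mul (by positivity), ← ENNReal.ofReal_mul (by positivity)]
    apply ENNReal.ofReal_le_ofReal
    -- the final real inequality
    have hJr : (J:ℝ) = (j₂:ℝ) - (N:ℝ) := by rw [hJ_def]; push_cast; ring
    have hj₂r : (j₂:ℝ) = (j₀:ℝ) + (n:ℝ) + 3 := by rw [hj₂_def]; push_cast; ring
    set CE : ℝ := ((n:ℝ)+3)*(n:ℝ) + 2*(n:ℝ) - α with hCE_def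
    have hW0eq : W0 = CE + (-(((N:ℝ)+1) * α)) + (j₀:ℝ)*(n:ℝ) := by
      rw [hW0_def, hCE_def, hJr, hj₂r]
      ring
    have hsn : s^n = (2:ℝ)^((j₀:ℝ) * (n:ℝ)) := by
      rw [hs_def, two_zpow_npow]
    have hkey2 : (2:ℝ)^(-(((N:ℝ)+1) * α)) ≤ Real.exp (-cc/ε^q) := by
      rw [Real.rpow_def_of_pos two_pos]
      apply Real.exp_le_exp.mpr
      have hdiv : -cc/ε^q = -(cc * Nr) := by
        rw [hNr_def, div_eq_mul_inv, neg_mul]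
      rw [hdiv, hcc_def]
      have hmul := mul_le_mul_of_nonneg_left hNgt.le
        (show (0:ℝ) ≤ α * Real.log 2 by positivity)
      nlinarith [hmul]
    have hform : (2:ℝ)^W0/δ' * (1-θh)⁻¹
        = ((2:ℝ)^CE/(δ'*(1-θh))) * (2:ℝ)^(-(((N:ℝ)+1) * α)) * (2:ℝ)^((j₀:ℝ)*(n:ℝ)) := by
      rw [hW0eq, Real.rpow_add two_pos, Real.rpow_add two_pos]
      have hδn : δ' ≠ 0 := hδ'0.ne'
      have hθn : (1:ℝ) - θh ≠ 0 := by linarith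
      field_simp
    have hCbig' : Cbig = (2:ℝ)^CE/(δ'*(1-θh)) := by rw [hCbig_def, hCE_def]
    rw [hform, hsn, hCbig']
    have hXpos : (0:ℝ) ≤ (2:ℝ)^CE/(δ'*(1-θh)) := by
      apply div_nonneg (Real.rpow_pos_of_pos two_pos _).le
      have : (0:ℝ) < 1 - θh := by linarith
      positivity
    have hYpos : (0:ℝ) ≤ (2:ℝ)^((j₀:ℝ)*(n:ℝ)) := (Real.rpow_pos_of_pos two_pos _).le
    exact mul_le_mul_of_nonneg_right
      (mul_le_mul_of_nonneg_left hkey2 hXpos) hYpos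
  -- conclusion
  calc volume {x ∈ Qc | ENNReal.ofReal (τ * lam) < Fpot n α q μ x ∧
        Mfrac n α μ x ≤ ENNReal.ofReal (ε * lam)}
      ≤ volume (⋃ (j : {j : ℤ | j < J}),
          ({x | ENNReal.ofReal (T j) < μ (Metric.ball x ((2:ℝ)^(j:ℤ)))} ∩ Qc)) :=
        measure_mono hsub
    _ ≤ ∑' (j : {j : ℤ | j < J}),
          volume ({x | ENNReal.ofReal (T j) < μ (Metric.ball x ((2:ℝ)^(j:ℤ)))} ∩ Qc) :=
        measure_iUnion_le _
    _ ≤ ∑' (j : {j : ℤ | j < J}),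
          ENNReal.ofReal ((2*(2:ℝ)^(j:ℤ))^n * (lam * ((2:ℝ)^(j₂+1)) ^ ((n:ℝ) - α)) / T j) :=
        ENNReal.tsum_le_tsum (fun j => hEj j j.2)
    _ ≤ ENNReal.ofReal (Cbig * Real.exp (-cc / ε ^ q)) * ENNReal.ofReal (s ^ n) := hsum
    _ = ENNReal.ofReal (Cbig * Real.exp (-cc / ε ^ q)) * volume Qc := by
        rw [hQc_def, volume_axisCube n center s hs.le]

end
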